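/- The number of noncrossing set partitions of [n] with exactly k blocks equals the Narayana number N(n,k) = (1/n) * C(n,k) * C(n,k-1). -/

import Mathlib

/-- `P` is a set partition of `Fin n`. -/
def IsSetPartition (n : ℕ) (P : Finset (Finset (Fin n))) : Prop :=
  (∀ B ∈ P, B ≠ ∅) ∧ ∀ x : Fin n, ∃! B, B ∈ P ∧ x ∈ B

/-- The partition `P` is noncrossing. -/
def IsNoncrossing (n : ℕ) (P : Finset (Finset (Fin n))) : Prop :=
  ¬ ∃ a b c d : Fin n, a < b ∧ b < c ∧ c < d ∧
    ∃ B₁ ∈ P, ∃ B₂ ∈ P, B₁ ≠ B₂ ∧ a ∈ B₁ ∧ c ∈ B₁ ∧ b ∈ B₂ ∧ d ∈ B₂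

open Finset

namespace NCnar

attribute [local instance] Classical.propDecidable

variable {n : ℕ}

lemma card_split_Icc_Ioc (S : Finset (Fin n)) {a j c : Fin n} (h1 : a ≤ j) (h2 : j ≤ c) :
    (S ∩ Finset.Icc a c).card = (S ∩ Finset.Icc a j).card + (S ∩ Finset.Ioc j c).card := by
  rw [← Finset.card_union_of_disjoint]
  · congr 1
    ext x
    simp only [Finset.mem_inter, Finset.mem_union, Finset.mem_Icc, Finset.mem_Ioc,
      ← and_or_left, Fin.le_def, Fin.lt_def] at *
    exact and_congr_right fun _ => by omega
  · rw [Finset.disjoint_left]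
    intro x hx hy
    simp only [Finset.mem_inter, Finset.mem_Icc, Finset.mem_Ioc, Fin.le_def, Fin.lt_def] at hx hy
    omega

lemma card_split_Ico_Ioo (S : Finset (Fin n)) {a j c : Fin n} (h1 : a ≤ j) (h2 : j < c) :
    (S ∩ Finset.Ico a c).card = (S ∩ Finset.Icc a j).card + (S ∩ Finset.Ioo j c).card := by
  rw [← Finset.card_union_of_disjoint]
  · congr 1
    ext x
    simp only [Finset.mem_inter, Finset.mem_union, Finset.mem_Icc, Finset.mem_Ico,
      Finset.mem_Ioo, ← and_or_left, Fin.le_def, Fin.lt_def] at *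
    exact and_congr_right fun _ => by omega
  · rw [Finset.disjoint_left]
    intro x hx hy
    simp only [Finset.mem_inter, Finset.mem_Icc, Finset.mem_Ioo, Fin.le_def, Fin.lt_def] at hx hy
    omega

lemma card_split_Ioc_Ioc (S : Finset (Fin n)) {a j c : Fin n} (h1 : a ≤ j) (h2 : j ≤ c) :
    (S ∩ Finset.Ioc a c).card = (S ∩ Finset.Ioc a j).card + (S ∩ Finset.Ioc j c).card := by
  rw [← Finset.card_union_of_disjoint]
  · congr 1
    ext x
    simp only [Finset.mem_inter, Finset.mem_union, Finset.mem_Ioc,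
      ← and_or_left, Fin.le_def, Fin.lt_def] at *
    exact and_congr_right fun _ => by omega
  · rw [Finset.disjoint_left]
    intro x hx hy
    simp only [Finset.mem_inter, Finset.mem_Ioc, Fin.le_def, Fin.lt_def] at hx hy
    omega

lemma card_inter_insert (S T : Finset (Fin n)) (a : Fin n) (ha : a ∉ T) :
    (S ∩ insert a T).card = (if a ∈ S then 1 else 0) + (S ∩ T).card := by
  rw [Finset.insert_eq, Finset.inter_union_distrib_left, Finset.card_union_of_disjoint]
  · congr 1
    by_cases h : a ∈ S
    · rw [Finset.inter_singleton_of_mem h, if_pos h, Finset.card_singleton]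
    · rw [Finset.inter_singleton_of_notMem h, if_neg h, Finset.card_empty]
  · rw [Finset.disjoint_left]
    intro x hx hy
    rw [Finset.mem_inter, Finset.mem_singleton] at hx
    exact ha (hx.2 ▸ (Finset.mem_inter.mp hy).2)

lemma card_inter_Icc_cons (S : Finset (Fin n)) {a b : Fin n} (h : a ≤ b) :
    (S ∩ Finset.Icc a b).card = (if a ∈ S then 1 else 0) + (S ∩ Finset.Ioc a b).card := by
  rw [← Finset.Ioc_insert_left h, card_inter_insert]
  simp

lemma card_inter_Ico_cons (S : Finset (Fin n)) {a b : Fin n} (h : a < b) :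
    (S ∩ Finset.Ico a b).card = (if a ∈ S then 1 else 0) + (S ∩ Finset.Ioo a b).card := by
  rw [← Finset.Ioo_insert_left h, card_inter_insert]
  simp

/-- `o` is an opener whose block is still open when we arrive at position `i`. -/
def OpenAt (O C : Finset (Fin n)) (o i : Fin n) : Prop :=
  o ∈ O ∧ o ≤ i ∧ ∀ j, o ≤ j → j < i → (C ∩ Finset.Icc o j).card < (O ∩ Finset.Icc o j).card

/-- The pair (openers, closers) satisfies the ballot-type condition. -/
def Good (O C : Finset (Fin n)) : Prop :=
  ∀ i, (C ∩ Finset.Iio i).card < (O ∩ Finset.Iic i).card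

lemma OpenAt.mono {O C : Finset (Fin n)} {o b i : Fin n} (h : OpenAt O C o i)
    (hob : o ≤ b) (hbi : b ≤ i) : OpenAt O C o b :=
  ⟨h.1, hob, fun j h1 h2 => h.2.2 j h1 (lt_of_lt_of_le h2 hbi)⟩

lemma exists_open {O C : Finset (Fin n)} (hg : Good O C) (i : Fin n) :
    ∃ o, OpenAt O C o i := by
  classical
  set T : Finset (Fin n) :=
    univ.filter (fun t => t ≤ i ∧ (C ∩ Finset.Ico t i).card < (O ∩ Finset.Icc t i).card) with hT
  have hz : (⟨0, i.pos⟩ : Fin n) ∈ T := by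
    have h1 : Finset.Icc (⟨0, i.pos⟩ : Fin n) i = Finset.Iic i := by
      ext x
      simp only [Finset.mem_Icc, Finset.mem_Iic, Fin.le_def]
      omega
    have h2 : Finset.Ico (⟨0, i.pos⟩ : Fin n) i = Finset.Iio i := by
      ext x
      simp only [Finset.mem_Ico, Finset.mem_Iio, Fin.le_def, Fin.lt_def]
      omega
    simp only [hT, Finset.mem_filter, Finset.mem_univ, true_and, h1, h2]
    exact ⟨by simp only [Fin.le_def]; omega, hg i⟩
  have hne : T.Nonempty := ⟨_, hz⟩
  set t := T.max' hne with ht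
  have htT : t ∈ T := T.max'_mem hne
  simp only [hT, Finset.mem_filter] at htT
  obtain ⟨-, hti, htlt⟩ := htT
  refine ⟨t, ?_, hti, ?_⟩
  · -- t ∈ O
    rcases eq_or_lt_of_le hti with heq | hlt
    · rw [heq, Finset.Ico_self] at htlt
      simp only [Finset.inter_empty, Finset.card_empty] at htlt
      rw [Finset.Icc_self] at htlt
      have h1 : (O ∩ {i}).Nonempty := Finset.card_pos.mp (by omega)
      obtain ⟨x, hx⟩ := h1
      simp only [Finset.mem_inter, Finset.mem_singleton] at hx
      rw [heq, ← hx.2]; exact hx.1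
    · have hv := Fin.lt_def.mp hlt
      have hin := i.isLt
      set t' : Fin n := ⟨t.val + 1, by omega⟩ with ht'
      have ht't : t < t' := by rw [Fin.lt_def]; simp [ht']
      have ht'i : t' ≤ i := by rw [Fin.le_def]; simp only [ht']; omega
      have hnt' : t' ∉ T := fun h => absurd (T.le_max' t' h) (not_le.mpr ht't)
      simp only [hT, Finset.mem_filter, Finset.mem_univ, true_and, not_and, not_lt] at hnt'
      have hge := hnt' ht'i
      have e1 : Finset.Icc t' i = Finset.Ioc t i := by
        ext x
        simp only [Finset.mem_Icc, Finset.mem_Ioc, Fin.le_def, Fin.lt_def, ht']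
        omega
      have e2 : Finset.Ico t' i = Finset.Ioo t i := by
        ext x
        simp only [Finset.mem_Ico, Finset.mem_Ioo, Fin.le_def, Fin.lt_def, ht']
        omega
      rw [e1, e2] at hge
      rw [card_inter_Ico_cons C hlt, card_inter_Icc_cons O hti] at htlt
      by_contra hto
      rw [if_neg hto] at htlt
      omega
  · -- openness condition
    intro j hj1 hj2
    by_contra hcon
    push_neg at hcon
    have hv := Fin.lt_def.mp hj2
    have hin := i.isLt
    set j' : Fin n := ⟨j.val + 1, by omega⟩ with hj'
    have hj'i : j' ≤ i := by rw [Fin.le_def]; simp only [hj']; omega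
    have htj' : t < j' := lt_of_le_of_lt hj1 (by rw [Fin.lt_def]; simp [hj'])
    have hnj' : j' ∉ T := fun h => absurd (T.le_max' j' h) (not_le.mpr htj')
    simp only [hT, Finset.mem_filter, Finset.mem_univ, true_and, not_and, not_lt] at hnj'
    have hge := hnj' hj'i
    have e1 : Finset.Icc j' i = Finset.Ioc j i := by
      ext x
      simp only [Finset.mem_Icc, Finset.mem_Ioc, Fin.le_def, Fin.lt_def, hj']
      omega
    have e2 : Finset.Ico j' i = Finset.Ioo j i := by
      ext x
      simp only [Finset.mem_Ico, Finset.mem_Ioo, Fin.le_def, Fin.lt_def, hj']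
      omega
    rw [e1, e2] at hge
    have s1 := card_split_Ico_Ioo C hj1 hj2
    have s2 := card_split_Icc_Ioc O hj1 (le_of_lt hj2)
    omega


/-- the (minimum of the) block that `i` belongs to: the maximal opener still open at `i`. -/
noncomputable def piF (O C : Finset (Fin n)) (i : Fin n) : Fin n :=
  if h : (univ.filter (fun o => OpenAt O C o i)).Nonempty then
    (univ.filter (fun o => OpenAt O C o i)).max' h else i

lemma piF_open (hg : Good O C) (i : Fin n) : OpenAt O C (piF O C i) i := by
  obtain ⟨o, ho⟩ := exists_open hg i
  have hne : (univ.filter (fun o => OpenAt O C o i)).Nonempty :=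
    ⟨o, by simp [Finset.mem_filter, ho]⟩
  rw [piF, dif_pos hne]
  have := Finset.max'_mem (univ.filter (fun o => OpenAt O C o i)) hne
  exact (Finset.mem_filter.mp this).2

lemma le_piF (hg : Good O C) {o i : Fin n} (h : OpenAt O C o i) : o ≤ piF O C i := by
  have hne : (univ.filter (fun o => OpenAt O C o i)).Nonempty :=
    ⟨o, by simp [Finset.mem_filter, h]⟩
  rw [piF, dif_pos hne]
  exact Finset.le_max' _ o (by simp [Finset.mem_filter, h])

lemma piF_mem (hg : Good O C) (i : Fin n) : piF O C i ∈ O := (piF_open hg i).1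

lemma piF_le (hg : Good O C) (i : Fin n) : piF O C i ≤ i := (piF_open hg i).2.1

lemma openAt_refl {o : Fin n} (ho : o ∈ O) : OpenAt O C o o :=
  ⟨ho, le_refl o, fun j h1 h2 => absurd (lt_of_le_of_lt h1 h2) (lt_irrefl o)⟩

lemma piF_self (hg : Good O C) {o : Fin n} (ho : o ∈ O) : piF O C o = o :=
  le_antisymm (piF_le hg o) (le_piF hg (openAt_refl ho))

/-- The fiber of an opener: the block. -/
noncomputable def fib (O C : Finset (Fin n)) (o : Fin n) : Finset (Fin n) :=
  univ.filter (fun x => piF O C x = o)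

lemma mem_fib {o x : Fin n} : x ∈ fib O C o ↔ piF O C x = o := by
  simp [fib, Finset.mem_filter]

lemma self_mem_fib (hg : Good O C) {o : Fin n} (ho : o ∈ O) : o ∈ fib O C o :=
  mem_fib.mpr (piF_self hg ho)

set_option maxHeartbeats 1600000 in
/-- Key lemma ("everything between a closed stretch is balanced"):
if no opener in `(t, c]` is open at `c` and `c ∈ C`, then closers outnumber openers. -/
lemma closed_interval_lemma {t c : Fin n} (hc : c ∈ C) (htc : t < c)
    (h : ∀ o' ∈ O, t < o' → o' ≤ c → ¬ OpenAt O C o' c) :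
    (O ∩ Finset.Ioc t c).card < (C ∩ Finset.Ioc t c).card := by
  have main : ∀ d t, c.val - t.val = d → t < c →
      (∀ o' ∈ O, t < o' → o' ≤ c → ¬ OpenAt O C o' c) →
      (O ∩ Finset.Ioc t c).card < (C ∩ Finset.Ioc t c).card := by
    intro d
    induction d using Nat.strong_induction_on with
    | _ d ih =>
      intro t hd htc h
      rcases Finset.eq_empty_or_nonempty (O ∩ Finset.Ioc t c) with he | hne
      · rw [he]
        simp only [Finset.card_empty, Finset.card_pos]
        exact ⟨c, by simp [Finset.mem_inter, Finset.mem_Ioc, hc, htc]⟩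
      · set o₂ := (O ∩ Finset.Ioc t c).min' hne with ho₂
        have ho₂m : o₂ ∈ O ∩ Finset.Ioc t c := Finset.min'_mem _ hne
        rw [Finset.mem_inter, Finset.mem_Ioc] at ho₂m
        obtain ⟨ho₂O, hto₂, ho₂c⟩ := ho₂m
        have hnopen := h o₂ ho₂O hto₂ ho₂c
        rw [OpenAt] at hnopen
        push_neg at hnopen
        obtain ⟨j, hj1, hj2, hj3⟩ := hnopen ho₂O ho₂c
        have e1 : O ∩ Finset.Ioc t j = O ∩ Finset.Icc o₂ j := by
          ext x
          simp only [Finset.mem_inter, Finset.mem_Ioc, Finset.mem_Icc]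
          constructor
          · rintro ⟨hxO, hx1, hx2⟩
            refine ⟨hxO, ?_, hx2⟩
            have hx3 : x ∈ O ∩ Finset.Ioc t c := by
              rw [Finset.mem_inter, Finset.mem_Ioc]
              exact ⟨hxO, hx1, le_trans hx2 (le_of_lt hj2)⟩
            exact Finset.min'_le _ x hx3
          · rintro ⟨hxO, hx1, hx2⟩
            exact ⟨hxO, lt_of_lt_of_le hto₂ hx1, hx2⟩
        have htj : t ≤ j := le_trans (le_of_lt hto₂) hj1
        have s1 := card_split_Ioc_Ioc (n := n) O htj (le_of_lt hj2)
        have s2 := card_split_Ioc_Ioc (n := n) C htj (le_of_lt hj2)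
        have hsub : (C ∩ Finset.Icc o₂ j).card ≤ (C ∩ Finset.Ioc t j).card := by
          apply Finset.card_le_card
          apply Finset.inter_subset_inter (Finset.Subset.refl C)
          intro x hx
          rw [Finset.mem_Icc] at hx
          rw [Finset.mem_Ioc]
          exact ⟨lt_of_lt_of_le hto₂ hx.1, hx.2⟩
        have hrec : (O ∩ Finset.Ioc j c).card < (C ∩ Finset.Ioc j c).card := by
          have hjv := Fin.lt_def.mp hj2
          have htv := Fin.lt_def.mp hto₂
          have hj1v := Fin.le_def.mp hj1
          exact ih (c.val - j.val) (by omega) j rfl hj2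
            (fun o' ho' h1 h2 => h o' ho' (lt_of_le_of_lt htj h1) h2)
        have e2 : (O ∩ Finset.Ioc t j).card ≤ (C ∩ Finset.Ioc t j).card := by
          rw [e1]; omega
        omega
  exact main (c.val - t.val) t rfl htc h

/-- A closer closes the currently-open block: nothing after `c` lies in `c`'s block. -/
lemma fiber_max (hg : Good O C) {c x : Fin n} (hc : c ∈ C) (hcx : c < x) :
    piF O C x ≠ piF O C c := by
  intro heq
  set o := piF O C c with ho
  have hopen : OpenAt O C o c := piF_open hg c
  have hopenx : OpenAt O C o x := heq ▸ piF_open hg x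
  have hoc : o ≤ c := hopen.2.1
  -- openness of o at x evaluated at j = c
  have hkey := hopenx.2.2 c hoc hcx
  rcases eq_or_lt_of_le hoc with heq2 | hlt
  · -- o = c : then C∩Icc c c ≥ 1 but < O∩Icc c c ≤ 1 and c ∈ C makes both = 1, contradiction
    rw [← heq2] at hkey hc
    rw [Finset.Icc_self] at hkey
    have h1 : (C ∩ {o}).card = 1 := by
      rw [Finset.inter_singleton_of_mem hc, Finset.card_singleton]
    have h2 : (O ∩ {o}).card ≤ 1 :=
      le_trans (Finset.card_le_card Finset.inter_subset_right) (by simp)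
    omega
  · -- o < c
    have hno : ∀ o' ∈ O, o < o' → o' ≤ c → ¬ OpenAt O C o' c := by
      intro o' _ h1 h2 hop
      exact absurd (le_piF hg hop) (not_le.mpr h1)
    have hlem := closed_interval_lemma hc hlt hno
    have s1 := card_inter_Icc_cons (n := n) O hoc
    have s2 := card_inter_Icc_cons (n := n) C hoc
    have : o ∈ O := hopen.1
    rw [if_pos this] at s1
    omega

/-- minima of blocks of a partition-like family. -/
def Minima (P : Finset (Finset (Fin n))) : Finset (Fin n) :=
  univ.filter (fun x => ∀ B ∈ P, x ∈ B → ∀ y ∈ B, x ≤ y)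

def Maxima (P : Finset (Finset (Fin n))) : Finset (Fin n) :=
  univ.filter (fun x => ∀ B ∈ P, x ∈ B → ∀ y ∈ B, y ≤ x)

/-- The reconstruction map. -/
noncomputable def psi (O C : Finset (Fin n)) : Finset (Finset (Fin n)) :=
  O.image (fib O C)

lemma psi_partition (hg : Good O C) : IsSetPartition n (psi O C) := by
  constructor
  · intro B hB
    rw [psi, Finset.mem_image] at hB
    obtain ⟨o, hoO, rfl⟩ := hB
    exact Finset.nonempty_iff_ne_empty.mp ⟨o, self_mem_fib hg hoO⟩
  · intro x
    refine ⟨fib O C (piF O C x), ⟨Finset.mem_image_of_mem _ (piF_mem hg x), mem_fib.mpr rfl⟩, ?_⟩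
    rintro B ⟨hB, hxB⟩
    rw [psi, Finset.mem_image] at hB
    obtain ⟨o, hoO, rfl⟩ := hB
    rw [mem_fib.mp hxB]

lemma psi_noncrossing (hg : Good O C) : IsNoncrossing n (psi O C) := by
  rintro ⟨a, b, c, d, hab, hbc, hcd, B₁, hB₁, B₂, hB₂, hne, ha, hc, hb, hd⟩
  rw [psi, Finset.mem_image] at hB₁ hB₂
  obtain ⟨o₁, ho₁, rfl⟩ := hB₁
  obtain ⟨o₂, ho₂, rfl⟩ := hB₂
  rw [mem_fib] at ha hc hb hd
  have hoo : o₁ ≠ o₂ := fun h => hne (h ▸ rfl)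
  -- o₁ = piF a ≤ a < b and o₁ open at c, so o₁ open at b hence o₁ ≤ piF b = o₂
  have h1 : OpenAt O C o₁ c := hc ▸ piF_open hg c
  have h2 : OpenAt O C o₂ d := hd ▸ piF_open hg d
  have ho₁a : o₁ ≤ a := ha ▸ piF_le hg a
  have ho₂b : o₂ ≤ b := hb ▸ piF_le hg b
  have h3 : OpenAt O C o₁ b :=
    h1.mono (le_trans ho₁a (le_of_lt hab)) (le_of_lt hbc)
  have h4 : OpenAt O C o₂ c :=
    h2.mono (le_trans ho₂b (le_of_lt hbc)) (le_of_lt hcd)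
  have h5 : o₁ ≤ o₂ := hb ▸ le_piF hg h3
  have h6 : o₂ ≤ o₁ := hc ▸ le_piF hg h4
  exact hoo (le_antisymm h5 h6)

lemma psi_card (hg : Good O C) : (psi O C).card = O.card := by
  rw [psi]
  apply Finset.card_image_of_injOn
  intro o₁ h₁ o₂ h₂ heq
  have : o₁ ∈ fib O C o₂ := heq ▸ self_mem_fib hg h₁
  exact Eq.trans (piF_self hg h₁).symm (mem_fib.mp this)

lemma psi_minima (hg : Good O C) : Minima (psi O C) = O := by
  ext x
  simp only [Minima, Finset.mem_filter, Finset.mem_univ, true_and]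
  constructor
  · intro h
    have hx : x ∈ fib O C (piF O C x) := mem_fib.mpr rfl
    have hmem : fib O C (piF O C x) ∈ psi O C := Finset.mem_image_of_mem _ (piF_mem hg x)
    have h1 := h _ hmem hx (piF O C x) (self_mem_fib hg (piF_mem hg x))
    have h2 : piF O C x ≤ x := piF_le hg x
    have : piF O C x = x := le_antisymm h2 h1
    exact this ▸ piF_mem hg x
  · intro hxO B hB hxB y hyB
    rw [psi, Finset.mem_image] at hB
    obtain ⟨o, hoO, rfl⟩ := hB
    have h1 : x = o := by rw [← mem_fib.mp hxB, piF_self hg hxO]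
    rw [← h1] at hyB
    exact (mem_fib.mp hyB) ▸ piF_le hg y

lemma psi_maxima (hg : Good O C) (hcard : C.card = O.card) : Maxima (psi O C) = C := by
  have hsub : C ⊆ Maxima (psi O C) := by
    intro x hxC
    simp only [Maxima, Finset.mem_filter, Finset.mem_univ, true_and]
    intro B hB hxB y hyB
    rw [psi, Finset.mem_image] at hB
    obtain ⟨o, hoO, rfl⟩ := hB
    by_contra hyx
    push_neg at hyx
    exact fiber_max hg hxC hyx (by rw [mem_fib.mp hyB, mem_fib.mp hxB])
  have hle : (Maxima (psi O C)).card ≤ C.card := by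
    rw [hcard]
    apply Finset.card_le_card_of_injOn (fun x => piF O C x)
    · intro x _
      exact piF_mem hg x
    · intro x₁ hx₁ x₂ hx₂ heq
      simp only [Maxima, Finset.coe_filter, Set.mem_setOf_eq] at hx₁ hx₂
      have hB₁ : fib O C (piF O C x₁) ∈ psi O C :=
        Finset.mem_image_of_mem _ (piF_mem hg x₁)
      have h12 : x₂ ≤ x₁ :=
        hx₁.2 _ hB₁ (mem_fib.mpr rfl) x₂ (mem_fib.mpr heq.symm)
      have hB₂ : fib O C (piF O C x₂) ∈ psi O C :=
        Finset.mem_image_of_mem _ (piF_mem hg x₂)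
      have h21 : x₁ ≤ x₂ :=
        hx₂.2 _ hB₂ (mem_fib.mpr rfl) x₁ (mem_fib.mpr heq)
      exact le_antisymm h21 h12
  exact (Finset.eq_of_subset_of_card_le hsub hle).symm

variable {P : Finset (Finset (Fin n))}

noncomputable def blk (P : Finset (Finset (Fin n))) (x : Fin n) : Finset (Fin n) :=
  if h : ∃ B, B ∈ P ∧ x ∈ B then h.choose else ∅

lemma blk_spec (hP : IsSetPartition n P) (x : Fin n) : blk P x ∈ P ∧ x ∈ blk P x := by
  obtain ⟨B, hB⟩ := (hP.2 x).exists
  rw [blk, dif_pos ⟨B, hB⟩]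
  exact (⟨B, hB⟩ : ∃ B, B ∈ P ∧ x ∈ B).choose_spec

lemma blk_eq (hP : IsSetPartition n P) {B : Finset (Fin n)} {x : Fin n}
    (hB : B ∈ P) (hx : x ∈ B) : B = blk P x :=
  (hP.2 x).unique ⟨hB, hx⟩ (blk_spec hP x)

lemma block_eq_block (hP : IsSetPartition n P) {B₁ B₂ : Finset (Fin n)} {y : Fin n}
    (h1 : B₁ ∈ P) (h2 : B₂ ∈ P) (hy1 : y ∈ B₁) (hy2 : y ∈ B₂) : B₁ = B₂ :=
  (blk_eq hP h1 hy1).trans (blk_eq hP h2 hy2).symm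

lemma blk_nonempty (hP : IsSetPartition n P) (x : Fin n) : (blk P x).Nonempty :=
  ⟨x, (blk_spec hP x).2⟩

lemma block_nonempty (hP : IsSetPartition n P) {B : Finset (Fin n)} (hB : B ∈ P) :
    B.Nonempty :=
  Finset.nonempty_iff_ne_empty.mpr (hP.1 B hB)

lemma mem_minima_iff {x : Fin n} :
    x ∈ Minima P ↔ ∀ B ∈ P, x ∈ B → ∀ y ∈ B, x ≤ y := by
  simp [Minima, Finset.mem_filter]

lemma mem_maxima_iff {x : Fin n} :
    x ∈ Maxima P ↔ ∀ B ∈ P, x ∈ B → ∀ y ∈ B, y ≤ x := by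
  simp [Maxima, Finset.mem_filter]

lemma min'_mem_minima (hP : IsSetPartition n P) {B : Finset (Fin n)} (hB : B ∈ P)
    (h : B.Nonempty) : B.min' h ∈ Minima P := by
  rw [mem_minima_iff]
  intro B' hB' hmem y hy
  rw [block_eq_block hP hB' hB hmem (B.min'_mem h)] at hy
  exact B.min'_le y hy

lemma max'_mem_maxima (hP : IsSetPartition n P) {B : Finset (Fin n)} (hB : B ∈ P)
    (h : B.Nonempty) : B.max' h ∈ Maxima P := by
  rw [mem_maxima_iff]
  intro B' hB' hmem y hy
  rw [block_eq_block hP hB' hB hmem (B.max'_mem h)] at hy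
  exact B.le_max' y hy

lemma minima_card (hP : IsSetPartition n P) : (Minima P).card = P.card := by
  apply Finset.card_bij (fun x _ => blk P x)
  · intro x hx
    exact (blk_spec hP x).1
  · intro x₁ hx₁ x₂ hx₂ heq
    have h1 := mem_minima_iff.mp hx₁ _ (heq ▸ (blk_spec hP x₁).1) (heq ▸ (blk_spec hP x₁).2)
      x₂ (blk_spec hP x₂).2
    have h2 := mem_minima_iff.mp hx₂ _ (blk_spec hP x₂).1 (blk_spec hP x₂).2
      x₁ (heq ▸ (blk_spec hP x₁).2)
    exact le_antisymm h1 h2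
  · intro B hB
    refine ⟨(B.min' (block_nonempty hP hB)), min'_mem_minima hP hB _, ?_⟩
    exact (blk_eq hP hB (B.min'_mem _)).symm

lemma maxima_card (hP : IsSetPartition n P) : (Maxima P).card = P.card := by
  apply Finset.card_bij (fun x _ => blk P x)
  · intro x hx
    exact (blk_spec hP x).1
  · intro x₁ hx₁ x₂ hx₂ heq
    have h1 := mem_maxima_iff.mp hx₁ _ (heq ▸ (blk_spec hP x₁).1) (heq ▸ (blk_spec hP x₁).2)
      x₂ (blk_spec hP x₂).2
    have h2 := mem_maxima_iff.mp hx₂ _ (blk_spec hP x₂).1 (blk_spec hP x₂).2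
      x₁ (heq ▸ (blk_spec hP x₁).2)
    exact le_antisymm h2 h1
  · intro B hB
    refine ⟨(B.max' (block_nonempty hP hB)), max'_mem_maxima hP hB _, ?_⟩
    exact (blk_eq hP hB (B.max'_mem _)).symm

lemma ncross (hNC : IsNoncrossing n P) {a b c d : Fin n} {B₁ B₂ : Finset (Fin n)}
    (hab : a < b) (hbc : b < c) (hcd : c < d) (hB₁ : B₁ ∈ P) (hB₂ : B₂ ∈ P)
    (hne : B₁ ≠ B₂) (ha : a ∈ B₁) (hc : c ∈ B₁) (hb : b ∈ B₂) (hd : d ∈ B₂) : False :=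
  hNC ⟨a, b, c, d, hab, hbc, hcd, B₁, hB₁, B₂, hB₂, hne, ha, hc, hb, hd⟩

/-- goodness of the pair of minima and maxima. -/
lemma phi_good (hP : IsSetPartition n P) : Good (Minima P) (Maxima P) := by
  intro i
  have hmi : (blk P i).min' (blk_nonempty hP i) ∈ Minima P ∩ Finset.Iic i := by
    rw [Finset.mem_inter, Finset.mem_Iic]
    exact ⟨min'_mem_minima hP (blk_spec hP i).1 _, Finset.min'_le _ i (blk_spec hP i).2⟩
  have hle : (Maxima P ∩ Finset.Iio i).card ≤
      ((Minima P ∩ Finset.Iic i).erase ((blk P i).min' (blk_nonempty hP i))).card := by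
    apply Finset.card_le_card_of_injOn
      (fun x => (blk P x).min' (blk_nonempty hP x))
    · intro x hx
      obtain ⟨hxM, hxi'⟩ := Finset.mem_inter.mp hx
      have hxi := Finset.mem_Iio.mp hxi'
      simp only [Finset.mem_coe]
      rw [Finset.mem_erase]
      constructor
      · intro heq
        -- then blk x = blk i, but x is the max of its block and i ∈ blk i
        have hcommon : blk P x = blk P i := by
          apply block_eq_block hP (blk_spec hP x).1 (blk_spec hP i).1
            ((blk P x).min'_mem _)
          rw [heq]
          exact (blk P i).min'_mem _
        have := mem_maxima_iff.mp hxM _ (blk_spec hP x).1 (blk_spec hP x).2 i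
          (hcommon ▸ (blk_spec hP i).2)
        exact absurd hxi (not_lt.mpr this)
      · rw [Finset.mem_inter, Finset.mem_Iic]
        refine ⟨min'_mem_minima hP (blk_spec hP x).1 _, ?_⟩
        exact le_trans (Finset.min'_le _ x (blk_spec hP x).2) (le_of_lt hxi)
    · intro x₁ hx₁ x₂ hx₂ heq
      simp only [Finset.coe_inter, Set.mem_inter_iff, Finset.mem_coe] at hx₁ hx₂
      replace heq : (blk P x₁).min' (blk_nonempty hP x₁)
          = (blk P x₂).min' (blk_nonempty hP x₂) := heq
      have hcommon : blk P x₁ = blk P x₂ := by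
        apply block_eq_block hP (blk_spec hP x₁).1 (blk_spec hP x₂).1
          ((blk P x₁).min'_mem _)
        rw [heq]
        exact (blk P x₂).min'_mem _
      have h1 := mem_maxima_iff.mp hx₁.1 _ (blk_spec hP x₁).1 (blk_spec hP x₁).2 x₂
        (hcommon ▸ (blk_spec hP x₂).2)
      have h2 := mem_maxima_iff.mp hx₂.1 _ (blk_spec hP x₂).1 (blk_spec hP x₂).2 x₁
        (hcommon ▸ (blk_spec hP x₁).2)
      exact le_antisymm h2 h1
  calc (Maxima P ∩ Finset.Iio i).card
      ≤ _ := hle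
    _ < (Minima P ∩ Finset.Iic i).card := Finset.card_erase_lt_of_mem hmi

variable {P : Finset (Finset (Fin n))}

/-- the minimum of a block is open at every element of the block. -/
lemma phi_open (hP : IsSetPartition n P) (hNC : IsNoncrossing n P)
    {B : Finset (Fin n)} (hB : B ∈ P) {x : Fin n} (hx : x ∈ B) :
    OpenAt (Minima P) (Maxima P) (B.min' (block_nonempty hP hB)) x := by
  set o := B.min' (block_nonempty hP hB) with ho
  have hoM : o ∈ Minima P := min'_mem_minima hP hB _
  have hox : o ≤ x := B.min'_le x hx
  refine ⟨hoM, hox, ?_⟩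
  intro j hj1 hj2
  have hmo : o ∈ Minima P ∩ Finset.Icc o j := by
    rw [Finset.mem_inter, Finset.mem_Icc]
    exact ⟨hoM, le_refl o, hj1⟩
  have hle : (Maxima P ∩ Finset.Icc o j).card ≤
      ((Minima P ∩ Finset.Icc o j).erase o).card := by
    apply Finset.card_le_card_of_injOn (fun y => (blk P y).min' (blk_nonempty hP y))
    · intro y hy
      obtain ⟨hyM, hy2⟩ := Finset.mem_inter.mp hy
      obtain ⟨hoy, hyj⟩ := Finset.mem_Icc.mp hy2
      have hBne : blk P y ≠ B := by
        intro heq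
        have hxy : x ≤ y := mem_maxima_iff.mp hyM _ (blk_spec hP y).1 (blk_spec hP y).2 x
          (heq ▸ hx)
        exact absurd (lt_of_le_of_lt hyj hj2) (not_lt.mpr hxy)
      have hfyy : (blk P y).min' (blk_nonempty hP y) ≤ y :=
        Finset.min'_le _ y (blk_spec hP y).2
      have hofy : o ≤ (blk P y).min' (blk_nonempty hP y) := by
        by_contra hcon
        push_neg at hcon
        have hoy' : o < y := by
          rcases eq_or_lt_of_le hoy with heq | h
          · exfalso
            apply hBne
            exact (blk_eq hP hB (heq ▸ B.min'_mem (block_nonempty hP hB))).symm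
          · exact h
        exact ncross hNC hcon hoy' (lt_of_le_of_lt hyj hj2) (blk_spec hP y).1 hB hBne
          ((blk P y).min'_mem _) (blk_spec hP y).2 (B.min'_mem _) hx
      have hfyne : (blk P y).min' (blk_nonempty hP y) ≠ o := by
        intro heq
        apply hBne
        apply block_eq_block hP (blk_spec hP y).1 hB ((blk P y).min'_mem _)
        rw [heq, ho]
        exact B.min'_mem _
      simp only [Finset.mem_coe]
      rw [Finset.mem_erase, Finset.mem_inter, Finset.mem_Icc]
      exact ⟨hfyne, min'_mem_minima hP (blk_spec hP y).1 _, hofy, le_trans hfyy hyj⟩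
    · intro y₁ hy₁ y₂ hy₂ heq
      simp only [Finset.coe_inter, Set.mem_inter_iff, Finset.mem_coe] at hy₁ hy₂
      replace heq : (blk P y₁).min' (blk_nonempty hP y₁)
          = (blk P y₂).min' (blk_nonempty hP y₂) := heq
      have hcommon : blk P y₁ = blk P y₂ := by
        apply block_eq_block hP (blk_spec hP y₁).1 (blk_spec hP y₂).1
          ((blk P y₁).min'_mem _)
        rw [heq]
        exact (blk P y₂).min'_mem _
      have h1 := mem_maxima_iff.mp hy₁.1 _ (blk_spec hP y₁).1 (blk_spec hP y₁).2 y₂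
        (hcommon ▸ (blk_spec hP y₂).2)
      have h2 := mem_maxima_iff.mp hy₂.1 _ (blk_spec hP y₂).1 (blk_spec hP y₂).2 y₁
        (hcommon ▸ (blk_spec hP y₁).2)
      exact le_antisymm h2 h1
  calc (Maxima P ∩ Finset.Icc o j).card
      ≤ _ := hle
    _ < (Minima P ∩ Finset.Icc o j).card := Finset.card_erase_lt_of_mem hmo

/-- anything open at `x` is at most the minimum of the block of `x`. -/
lemma open_le_min (hP : IsSetPartition n P) (hNC : IsNoncrossing n P) {o' x : Fin n}
    (ho' : OpenAt (Minima P) (Maxima P) o' x) :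
    o' ≤ (blk P x).min' (blk_nonempty hP x) := by
  have ho'M : o' ∈ Minima P := ho'.1
  have ho'x : o' ≤ x := ho'.2.1
  set B' := blk P o' with hB'
  have hB'P : B' ∈ P := (blk_spec hP o').1
  have ho'B' : o' ∈ B' := (blk_spec hP o').2
  have hB'ne : (B'.Nonempty) := blk_nonempty hP o'
  set M' := B'.max' hB'ne with hM'
  have ho'M' : o' ≤ M' := B'.le_max' o' ho'B'
  -- Step 1 : x ≤ M'
  have hxM' : x ≤ M' := by
    by_contra hcon
    push_neg at hcon
    have hkey := ho'.2.2 M' ho'M' hcon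
    have hle : (Minima P ∩ Finset.Icc o' M').card ≤ (Maxima P ∩ Finset.Icc o' M').card := by
      apply Finset.card_le_card_of_injOn (fun y => (blk P y).max' (blk_nonempty hP y))
      · intro y hy
        obtain ⟨hyM, hy2⟩ := Finset.mem_inter.mp hy
        obtain ⟨hoy, hyM'⟩ := Finset.mem_Icc.mp hy2
        have hmax : (blk P y).max' (blk_nonempty hP y) ∈ Maxima P :=
          max'_mem_maxima hP (blk_spec hP y).1 _
        have hymax : y ≤ (blk P y).max' (blk_nonempty hP y) :=
          Finset.le_max' _ y (blk_spec hP y).2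
        simp only [Finset.mem_coe]
        by_cases hbb : blk P y = B'
        · rw [Finset.mem_inter, Finset.mem_Icc]
          refine ⟨hmax, le_trans hoy hymax, ?_⟩
          have : (blk P y).max' (blk_nonempty hP y) = M' := by
            rw [hM']
            congr 1
          rw [this]
        · rw [Finset.mem_inter, Finset.mem_Icc]
          refine ⟨hmax, le_trans hoy hymax, ?_⟩
          by_contra hgt
          push_neg at hgt
          have ho'y : o' < y := by
            rcases eq_or_lt_of_le hoy with heq | h
            · exact absurd ((heq ▸ hB' : blk P y = blk P o')) hbb
            · exact h
          have hyM'2 : y < M' := by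
            rcases eq_or_lt_of_le hyM' with heq | h
            · exfalso
              apply hbb
              exact block_eq_block hP (blk_spec hP y).1 hB'P (blk_spec hP y).2
                (heq ▸ B'.max'_mem hB'ne)
            · exact h
          exact ncross hNC ho'y hyM'2 hgt hB'P (blk_spec hP y).1 (Ne.symm hbb)
            ho'B' (B'.max'_mem hB'ne) (blk_spec hP y).2 ((blk P y).max'_mem _)
      · intro y₁ hy₁ y₂ hy₂ heq
        simp only [Finset.coe_inter, Set.mem_inter_iff, Finset.mem_coe] at hy₁ hy₂
        replace heq : (blk P y₁).max' (blk_nonempty hP y₁)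
            = (blk P y₂).max' (blk_nonempty hP y₂) := heq
        have hcommon : blk P y₁ = blk P y₂ := by
          apply block_eq_block hP (blk_spec hP y₁).1 (blk_spec hP y₂).1
            ((blk P y₁).max'_mem _)
          rw [heq]
          exact (blk P y₂).max'_mem _
        have h1 := mem_minima_iff.mp hy₁.1 _ (blk_spec hP y₁).1 (blk_spec hP y₁).2 y₂
          (hcommon ▸ (blk_spec hP y₂).2)
        have h2 := mem_minima_iff.mp hy₂.1 _ (blk_spec hP y₂).1 (blk_spec hP y₂).2 y₁
          (hcommon ▸ (blk_spec hP y₁).2)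
        exact le_antisymm h1 h2
    omega
  -- Step 2
  by_contra hcon
  push_neg at hcon
  have hne : blk P x ≠ B' := by
    intro heq
    have h1 := mem_minima_iff.mp ho'M _ hB'P ho'B' ((blk P x).min' (blk_nonempty hP x))
      (heq ▸ (blk P x).min'_mem _)
    exact absurd hcon (not_lt.mpr h1)
  have ho'x2 : o' < x := by
    rcases eq_or_lt_of_le ho'x with heq | h
    · exact absurd (heq ▸ hB' : blk P x = blk P o') hne
    · exact h
  have hxM'2 : x < M' := by
    rcases eq_or_lt_of_le hxM' with heq | h
    · exfalso
      apply hne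
      exact block_eq_block hP (blk_spec hP x).1 hB'P (blk_spec hP x).2
        (heq ▸ B'.max'_mem hB'ne)
    · exact h
  exact ncross hNC hcon ho'x2 hxM'2 (blk_spec hP x).1 hB'P hne
    ((blk P x).min'_mem _) (blk_spec hP x).2 ho'B' (B'.max'_mem hB'ne)

lemma phi_piF (hP : IsSetPartition n P) (hNC : IsNoncrossing n P) (x : Fin n) :
    piF (Minima P) (Maxima P) x = (blk P x).min' (blk_nonempty hP x) := by
  have hg := phi_good hP
  apply le_antisymm
  · exact open_le_min hP hNC (piF_open hg x)
  · exact le_piF hg (phi_open hP hNC (blk_spec hP x).1 (blk_spec hP x).2)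

lemma fib_eq_blk (hP : IsSetPartition n P) (hNC : IsNoncrossing n P) {o : Fin n}
    (ho : o ∈ Minima P) : fib (Minima P) (Maxima P) o = blk P o := by
  ext x
  rw [mem_fib, phi_piF hP hNC]
  constructor
  · intro heq
    have hmem : o ∈ blk P x := heq ▸ (blk P x).min'_mem _
    have hbb := block_eq_block hP (blk_spec hP x).1 (blk_spec hP o).1 hmem (blk_spec hP o).2
    rw [← hbb]
    exact (blk_spec hP x).2
  · intro hx
    have hbb : blk P x = blk P o :=
      block_eq_block hP (blk_spec hP x).1 (blk_spec hP o).1 (blk_spec hP x).2 hx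
    have h1 : (blk P x).min' (blk_nonempty hP x) ∈ blk P o := by
      rw [← hbb]; exact (blk P x).min'_mem _
    have h2 := mem_minima_iff.mp ho _ (blk_spec hP o).1 (blk_spec hP o).2 _ h1
    have ho2 : o ∈ blk P x := by rw [hbb]; exact (blk_spec hP o).2
    have h3 : (blk P x).min' (blk_nonempty hP x) ≤ o := Finset.min'_le _ o ho2
    exact le_antisymm h3 h2

lemma phi_psi (hP : IsSetPartition n P) (hNC : IsNoncrossing n P) :
    psi (Minima P) (Maxima P) = P := by
  ext B
  rw [psi, Finset.mem_image]
  constructor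
  · rintro ⟨o, hoM, rfl⟩
    rw [fib_eq_blk hP hNC hoM]
    exact (blk_spec hP o).1
  · intro hB
    have hne := block_nonempty hP hB
    refine ⟨B.min' hne, min'_mem_minima hP hB hne, ?_⟩
    rw [fib_eq_blk hP hNC (min'_mem_minima hP hB hne)]
    exact (blk_eq hP hB (B.min'_mem hne)).symm

/-- Part A: noncrossing partitions with `k` blocks are equinumerous with good pairs. -/
noncomputable def partPairEquiv (n k : ℕ) :
    {P : Finset (Finset (Fin n)) // IsSetPartition n P ∧ IsNoncrossing n P ∧ P.card = k} ≃
    {p : Finset (Fin n) × Finset (Fin n) // Good p.1 p.2 ∧ p.1.card = k ∧ p.2.card = k} where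
  toFun := fun ⟨P, hP, _, hc⟩ => ⟨(Minima P, Maxima P), phi_good hP,
    by rw [minima_card hP, hc], by rw [maxima_card hP, hc]⟩
  invFun := fun ⟨(O, C), hg, hO, _⟩ => ⟨psi O C, psi_partition hg, psi_noncrossing hg,
    by rw [psi_card hg, hO]⟩
  left_inv := fun ⟨P, hP, hNC, hc⟩ => Subtype.ext (phi_psi hP hNC)
  right_inv := fun ⟨(O, C), hg, hO, hC⟩ => Subtype.ext
    (Prod.ext (psi_minima hg) (psi_maxima hg (hC.trans hO.symm)))

/-- Dominance condition for the cycle-lemma stage. -/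
def Dominant (O D : Finset (Fin n)) : Prop :=
  ∀ i, (D ∩ Finset.Iic i).card < (O ∩ Finset.Iic i).card

section shift

variable [NeZero n]

/-- the largest element of `Fin n`. -/
def lst : Fin n := ⟨n - 1, by have := NeZero.pos n; omega⟩

lemma good_lst_mem {O C : Finset (Fin n)} (hg : Good O C) (hcard : C.card = O.card) :
    (lst : Fin n) ∈ C := by
  have h := hg lst
  have h1 : Finset.Iic (lst : Fin n) = univ := by
    ext x
    simp only [Finset.mem_Iic, Finset.mem_univ, iff_true, Fin.le_def, lst]
    have := x.isLt
    omega
  have h2 : Finset.Iio (lst : Fin n) = univ.erase lst := by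
    ext x
    simp only [Finset.mem_Iio, Finset.mem_erase, Finset.mem_univ, and_true, Fin.lt_def,
      Ne, Fin.ext_iff]
    simp only [lst]
    have := x.isLt
    omega
  rw [h1, h2, Finset.inter_univ, ← Finset.erase_inter_comm, Finset.inter_univ] at h
  by_contra hmem
  rw [Finset.erase_eq_of_notMem hmem] at h
  omega

lemma dominant_zero_not_mem {O D : Finset (Fin n)} (hd : Dominant O D) :
    (0 : Fin n) ∉ D := by
  intro hmem
  have h := hd 0
  have h1 : 0 < (D ∩ Finset.Iic 0).card :=
    Finset.card_pos.mpr ⟨0, by simp [Finset.mem_inter, hmem]⟩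
  have h2 : (O ∩ Finset.Iic 0).card ≤ 1 := by
    apply le_trans (Finset.card_le_card Finset.inter_subset_right)
    have : Finset.Iic (0 : Fin n) = {0} := by
      ext x
      rw [Finset.mem_Iic, Finset.mem_singleton]
      exact ⟨fun h => le_antisymm h (Fin.zero_le _), fun h => h ▸ le_refl _⟩
    rw [this, Finset.card_singleton]
  omega

lemma pos_of_ne_zero {d : Fin n} (h : d ≠ 0) : 0 < d.val := by
  have h' : d.val ≠ 0 := fun h'' => h (Fin.ext (by rw [h'', Fin.val_zero]))
  omega

lemma val_add_one {c : Fin n} (h : c.val < n - 1) : (c + 1).val = c.val + 1 := by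
  have hn : 2 ≤ n := by omega
  have h1 : (1 : Fin n).val = 1 := by
    rw [Fin.val_one']
    exact Nat.mod_eq_of_lt (by omega)
  rw [Fin.add_def]
  show (c.val + (1 : Fin n).val) % n = c.val + 1
  rw [h1]
  exact Nat.mod_eq_of_lt (by omega)

lemma val_sub_one {d : Fin n} (h : d ≠ 0) : (d - 1).val = d.val - 1 := by
  have hd : 0 < d.val := pos_of_ne_zero h
  have hn : 2 ≤ n := by have := d.isLt; omega
  have h1 : (1 : Fin n).val = 1 := by
    rw [Fin.val_one']
    exact Nat.mod_eq_of_lt (by omega)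
  rw [Fin.sub_def]
  show (n - (1 : Fin n).val + d.val) % n = d.val - 1
  rw [h1]
  have h2 : n - 1 + d.val = n + (d.val - 1) := by omega
  rw [h2, Nat.add_mod_left]
  exact Nat.mod_eq_of_lt (by have := d.isLt; omega)

/-- closers to down-steps -/
def toD (C : Finset (Fin n)) : Finset (Fin n) := (C.erase lst).image (· + 1)

/-- down-steps to closers -/
def toC (D : Finset (Fin n)) : Finset (Fin n) := insert lst (D.image (· - 1))

lemma count_toD (C : Finset (Fin n)) (i : Fin n) :
    ((toD C) ∩ Finset.Iic i).card = (C ∩ Finset.Iio i).card := by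
  have himg : (toD C) ∩ Finset.Iic i = (C ∩ Finset.Iio i).image (· + 1) := by
    ext d
    simp only [toD, Finset.mem_inter, Finset.mem_image, Finset.mem_erase, Finset.mem_Iic,
      Finset.mem_Iio]
    constructor
    · rintro ⟨⟨c, ⟨hcl, hcC⟩, rfl⟩, hle⟩
      refine ⟨c, ⟨hcC, ?_⟩, rfl⟩
      have hcv : c.val < n - 1 := by
        have := c.isLt
        have : c.val ≠ n - 1 := fun hh => hcl (Fin.ext hh)
        omega
      have := val_add_one hcv
      rw [Fin.le_def, this] at hle
      rw [Fin.lt_def]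
      omega
    · rintro ⟨c, ⟨hcC, hlt⟩, rfl⟩
      rw [Fin.lt_def] at hlt
      have hiv := i.isLt
      have hcv : c.val < n - 1 := by omega
      refine ⟨⟨c, ⟨fun hh => ?_, hcC⟩, rfl⟩, ?_⟩
      · rw [hh] at hcv
        simp only [lst] at hcv
        omega
      · rw [Fin.le_def, val_add_one hcv]
        omega
  rw [himg, Finset.card_image_of_injective _ (add_left_injective 1)]

lemma count_toC {D : Finset (Fin n)} (h0 : (0 : Fin n) ∉ D) (i : Fin n) :
    ((toC D) ∩ Finset.Iio i).card = (D ∩ Finset.Iic i).card := by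
  have himg : (toC D) ∩ Finset.Iio i = (D ∩ Finset.Iic i).image (· - 1) := by
    ext c
    simp only [toC, Finset.mem_inter, Finset.mem_image, Finset.mem_insert, Finset.mem_Iic,
      Finset.mem_Iio]
    constructor
    · rintro ⟨hc, hlt⟩
      rcases hc with rfl | ⟨d, hdD, rfl⟩
      · exfalso
        rw [Fin.lt_def] at hlt
        simp only [lst] at hlt
        have := i.isLt
        omega
      · refine ⟨d, ⟨hdD, ?_⟩, rfl⟩
        have hd0 : d ≠ 0 := fun hh => h0 (hh ▸ hdD)
        rw [Fin.lt_def, val_sub_one hd0] at hlt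
        have hdv : 0 < d.val := pos_of_ne_zero hd0
        rw [Fin.le_def]
        omega
    · rintro ⟨d, ⟨hdD, hle⟩, rfl⟩
      have hd0 : d ≠ 0 := fun hh => h0 (hh ▸ hdD)
      have hdv : 0 < d.val := pos_of_ne_zero hd0
      rw [Fin.le_def] at hle
      refine ⟨Or.inr ⟨d, hdD, rfl⟩, ?_⟩
      rw [Fin.lt_def, val_sub_one hd0]
      omega
  rw [himg]
  exact Finset.card_image_of_injective _
    (fun a b hab => by have h2 := congrArg (· + 1) hab; simpa [sub_add_cancel] using h2)

lemma lst_not_mem_image_sub {D : Finset (Fin n)} (h0 : (0 : Fin n) ∉ D) :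
    (lst : Fin n) ∉ D.image (· - 1) := by
  rintro hmem
  rw [Finset.mem_image] at hmem
  obtain ⟨d, hdD, hd⟩ := hmem
  have hd0 : d ≠ 0 := fun hh => h0 (hh ▸ hdD)
  have := val_sub_one hd0
  rw [hd] at this
  simp only [lst] at this
  have h1 := d.isLt
  have hdv : 0 < d.val := pos_of_ne_zero hd0
  omega

/-- Good pairs of size (k,k) correspond to dominant pairs of size (k, k-1). -/
noncomputable def goodDomEquiv (k : ℕ) (hk : 1 ≤ k) :
    {p : Finset (Fin n) × Finset (Fin n) // Good p.1 p.2 ∧ p.1.card = k ∧ p.2.card = k} ≃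
    {p : Finset (Fin n) × Finset (Fin n) // Dominant p.1 p.2 ∧ p.1.card = k ∧ p.2.card = k - 1}
    where
  toFun := fun ⟨(O, C), hg, hO, hC⟩ => ⟨(O, toD C), by
    refine ⟨?_, hO, ?_⟩
    · intro i
      rw [count_toD]
      exact hg i
    · rw [toD, Finset.card_image_of_injective _ (add_left_injective 1),
        Finset.card_erase_of_mem (good_lst_mem hg (hC.trans hO.symm)), hC]⟩
  invFun := fun ⟨(O, D), hd, hO, hD⟩ => ⟨(O, toC D), by
    refine ⟨?_, hO, ?_⟩
    · intro i
      rw [count_toC (dominant_zero_not_mem hd)]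
      exact hd i
    · rw [toC, Finset.card_insert_of_notMem (lst_not_mem_image_sub (dominant_zero_not_mem hd))]
      rw [Finset.card_image_of_injective _
        (fun (a : Fin n) (b : Fin n) (hab : a - 1 = b - 1) =>
          by have h2 := congrArg (· + 1) hab; simpa [sub_add_cancel] using h2), hD]
      omega⟩
  left_inv := fun ⟨(O, C), hg, hO, hC⟩ => by
    apply Subtype.ext
    simp only [Prod.mk.injEq]
    refine ⟨by trivial, ?_⟩
    rw [toC, toD, Finset.image_image]
    have hcomp : ((fun x : Fin n => x - 1) ∘ (fun x : Fin n => x + 1)) = id := by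
      funext x; simp
    rw [hcomp, Finset.image_id, Finset.insert_erase (good_lst_mem hg (hC.trans hO.symm))]
  right_inv := fun ⟨(O, D), hd, hO, hD⟩ => by
    apply Subtype.ext
    simp only [Prod.mk.injEq]
    refine ⟨by trivial, ?_⟩
    rw [toD, toC, Finset.erase_insert (lst_not_mem_image_sub (dominant_zero_not_mem hd)),
      Finset.image_image]
    have hcomp : ((fun x : Fin n => x + 1) ∘ (fun x : Fin n => x - 1)) = id := by
      funext x; simp
    rw [hcomp, Finset.image_id]

end shift
section cycle

variable [NeZero n]

/-- step word of a pair, extended periodically. -/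
noncomputable def wd (O D : Finset (Fin n)) (t : ℕ) : ℤ :=
  (if (⟨t % n, Nat.mod_lt t (NeZero.pos n)⟩ : Fin n) ∈ O then 1 else 0)
  - (if (⟨t % n, Nat.mod_lt t (NeZero.pos n)⟩ : Fin n) ∈ D then 1 else 0)

noncomputable def FF (O D : Finset (Fin n)) (m : ℕ) : ℤ :=
  ∑ t ∈ Finset.range m, wd O D t

lemma FF_succ (O D : Finset (Fin n)) (m : ℕ) :
    FF O D (m + 1) = FF O D m + wd O D m := Finset.sum_range_succ _ m

lemma wd_period (O D : Finset (Fin n)) (m : ℕ) : wd O D (m + n) = wd O D m := by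
  have he : (⟨(m + n) % n, Nat.mod_lt _ (NeZero.pos n)⟩ : Fin n)
      = (⟨m % n, Nat.mod_lt _ (NeZero.pos n)⟩ : Fin n) :=
    Fin.ext (by simp only [Nat.add_mod_right])
  rw [wd, wd, he]

lemma sum_indicator (S : Finset (Fin n)) :
    ∑ t ∈ Finset.range n, (if (⟨t % n, Nat.mod_lt t (NeZero.pos n)⟩ : Fin n) ∈ S
      then (1 : ℤ) else 0) = S.card := by
  rw [← Fin.sum_univ_eq_sum_range
    (fun t => if (⟨t % n, Nat.mod_lt t (NeZero.pos n)⟩ : Fin n) ∈ S then (1 : ℤ) else 0) n]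
  rw [Finset.sum_congr rfl
    (fun i _ => by rw [show (⟨i.val % n, Nat.mod_lt i.val (NeZero.pos n)⟩ : Fin n) = i from
      Fin.ext (Nat.mod_eq_of_lt i.isLt)])]
  rw [Finset.sum_ite_mem, Finset.univ_inter, Finset.sum_const]
  simp

lemma FF_period {O D : Finset (Fin n)} {k : ℕ} (hk : 1 ≤ k) (hO : O.card = k)
    (hD : D.card = k - 1) : ∀ m, FF O D (m + n) = FF O D m + 1 := by
  intro m
  induction m with
  | zero =>
    simp only [Nat.zero_add, FF, Finset.range_zero, Finset.sum_empty]
    rw [show (0 : ℤ) + 1 = 1 by ring]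
    have he : ∑ t ∈ Finset.range n, wd O D t
        = ∑ t ∈ Finset.range n, ((if (⟨t % n, Nat.mod_lt t (NeZero.pos n)⟩ : Fin n) ∈ O
            then (1 : ℤ) else 0)
          - (if (⟨t % n, Nat.mod_lt t (NeZero.pos n)⟩ : Fin n) ∈ D then (1 : ℤ) else 0)) :=
      rfl
    rw [he, Finset.sum_sub_distrib, sum_indicator, sum_indicator, hO, hD]
    push_cast [Nat.cast_sub hk]
    ring
  | succ m ih =>
    rw [show m + 1 + n = (m + n) + 1 by omega, FF_succ, FF_succ, wd_period, ih]
    ring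

lemma mk_mod_sub_val (j : Fin n) {t : ℕ} (h1 : j.val ≤ t) (h2 : t < j.val + n) :
    ((⟨t % n, Nat.mod_lt t (NeZero.pos n)⟩ : Fin n) - j).val = t - j.val := by
  rw [Fin.sub_def]
  show (n - j.val + t % n) % n = t - j.val
  have hjn := j.isLt
  rcases Nat.lt_or_ge t n with hc | hc
  · rw [Nat.mod_eq_of_lt hc]
    rw [show n - j.val + t = n + (t - j.val) by omega, Nat.add_mod_left]
    exact Nat.mod_eq_of_lt (by omega)
  · have htm : t % n = t - n := by
      rw [Nat.mod_eq_sub_mod hc]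
      exact Nat.mod_eq_of_lt (by omega)
    rw [htm, show n - j.val + (t - n) = t - j.val by omega]
    exact Nat.mod_eq_of_lt (by omega)

lemma mk_mod_add (j x : Fin n) :
    (⟨(j.val + x.val) % n, Nat.mod_lt _ (NeZero.pos n)⟩ : Fin n) = x + j := by
  apply Fin.ext
  rw [Fin.add_def]
  show (j.val + x.val) % n = (x.val + j.val) % n
  rw [Nat.add_comm]

/-- the key counting lemma relating rotated prefix counts to the word. -/
lemma count_rot (S : Finset (Fin n)) (j i : Fin n) :
    ((S.image (· - j)) ∩ Finset.Iic i).card =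
      ((Finset.Ico j.val (j.val + i.val + 1)).filter
        (fun t => (⟨t % n, Nat.mod_lt t (NeZero.pos n)⟩ : Fin n) ∈ S)).card := by
  have hin := i.isLt
  symm
  apply Finset.card_bij
    (fun t _ => ((⟨t % n, Nat.mod_lt t (NeZero.pos n)⟩ : Fin n) - j))
  · intro t ht
    obtain ⟨htIco, htS⟩ := Finset.mem_filter.mp ht
    obtain ⟨h1, h2⟩ := Finset.mem_Ico.mp htIco
    rw [Finset.mem_inter]
    refine ⟨Finset.mem_image_of_mem _ htS, ?_⟩
    rw [Finset.mem_Iic, Fin.le_def, mk_mod_sub_val j h1 (by omega)]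
    omega
  · intro t₁ ht₁ t₂ ht₂ heq
    obtain ⟨h1, h2⟩ := Finset.mem_Ico.mp (Finset.mem_filter.mp ht₁).1
    obtain ⟨h3, h4⟩ := Finset.mem_Ico.mp (Finset.mem_filter.mp ht₂).1
    have hv := congrArg Fin.val heq
    rw [mk_mod_sub_val j h1 (by omega), mk_mod_sub_val j h3 (by omega)] at hv
    omega
  · intro x hx
    obtain ⟨hxi, hxI⟩ := Finset.mem_inter.mp hx
    obtain ⟨s, hsS, hsx⟩ := Finset.mem_image.mp hxi
    rw [Finset.mem_Iic, Fin.le_def] at hxI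
    refine ⟨j.val + x.val, ?_, ?_⟩
    · rw [Finset.mem_filter, Finset.mem_Ico]
      refine ⟨⟨by omega, by omega⟩, ?_⟩
      rw [mk_mod_add j x, ← hsx, sub_add_cancel]
      exact hsS
    · apply Fin.ext
      rw [mk_mod_sub_val j (by omega) (by have := x.isLt; omega)]
      omega

/-- rotated-dominance in terms of the height function. -/
lemma dom_shift_iff (O D : Finset (Fin n)) (j : Fin n) :
    Dominant (O.image (· - j)) (D.image (· - j)) ↔
      ∀ i : Fin n, FF O D j.val < FF O D (j.val + i.val + 1) := by
  have key : ∀ i : Fin n, FF O D (j.val + i.val + 1) - FF O D j.val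
      = (((O.image (· - j)) ∩ Finset.Iic i).card : ℤ)
        - (((D.image (· - j)) ∩ Finset.Iic i).card : ℤ) := by
    intro i
    have hsum : FF O D (j.val + i.val + 1) - FF O D j.val
        = ∑ t ∈ Finset.Ico j.val (j.val + i.val + 1), wd O D t := by
      rw [FF, FF, Finset.sum_Ico_eq_sub _ (by omega)]
    rw [hsum]
    have hsplit : ∑ t ∈ Finset.Ico j.val (j.val + i.val + 1), wd O D t
        = (∑ t ∈ Finset.Ico j.val (j.val + i.val + 1),
            if (⟨t % n, Nat.mod_lt t (NeZero.pos n)⟩ : Fin n) ∈ O then (1 : ℤ) else 0)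
          - (∑ t ∈ Finset.Ico j.val (j.val + i.val + 1),
            if (⟨t % n, Nat.mod_lt t (NeZero.pos n)⟩ : Fin n) ∈ D then (1 : ℤ) else 0) := by
      rw [← Finset.sum_sub_distrib]
      rfl
    rw [hsplit, Finset.sum_boole, Finset.sum_boole, count_rot O j i, count_rot D j i]
  constructor
  · intro hd i
    have h1 := hd i
    have h2 := key i
    omega
  · intro hf i
    have h1 := hf i
    have h2 := key i
    omega

/-- cycle lemma: there is exactly one good rotation. -/
lemma exists_unique_rot {O D : Finset (Fin n)} {k : ℕ} (hk : 1 ≤ k) (hO : O.card = k)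
    (hD : D.card = k - 1) :
    ∃! j : Fin n, Dominant (O.image (· - j)) (D.image (· - j)) := by
  have hper := FF_period hk hO hD
  have hpos := NeZero.pos n
  -- property Q in ℕ terms
  set Q : ℕ → Prop := fun j => ∀ m, j < m → m ≤ j + n → FF O D j < FF O D m with hQ
  have hiff : ∀ j : Fin n, (Dominant (O.image (· - j)) (D.image (· - j))) ↔ Q j.val := by
    intro j
    rw [dom_shift_iff]
    constructor
    · intro hf m hm1 hm2
      have hi : m - j.val - 1 < n := by omega
      have := hf ⟨m - j.val - 1, hi⟩
      simpa [show j.val + (m - j.val - 1) + 1 = m by omega] using this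
    · intro hq i
      exact hq (j.val + i.val + 1) (by omega) (by have := i.isLt; omega)
  -- the set of minimizers
  obtain ⟨j₀, hj₀r, hj₀min⟩ := Finset.exists_min_image (Finset.range n) (FF O D) ⟨0, by
    simp [hpos]⟩
  set T : Finset ℕ := (Finset.range n).filter
    (fun j => ∀ j' ∈ Finset.range n, FF O D j ≤ FF O D j') with hT
  have hTne : T.Nonempty := ⟨j₀, by
    rw [hT, Finset.mem_filter]
    exact ⟨hj₀r, hj₀min⟩⟩
  set js := T.max' hTne with hjs
  have hjsT : js ∈ T := T.max'_mem hTne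
  rw [hT, Finset.mem_filter] at hjsT
  obtain ⟨hjsr, hjsmin⟩ := hjsT
  have hjsn : js < n := Finset.mem_range.mp hjsr
  have hQjs : Q js := by
    intro m hm1 hm2
    rcases Nat.lt_or_ge m n with hc | hc
    · have hle := hjsmin m (Finset.mem_range.mpr hc)
      rcases lt_or_eq_of_le hle with h | h
      · exact h
      · exfalso
        have hmT : m ∈ T := by
          rw [hT, Finset.mem_filter]
          refine ⟨Finset.mem_range.mpr hc, ?_⟩
          intro j' hj'
          rw [← h]
          exact hjsmin j' hj'
        exact absurd (T.le_max' m hmT) (by omega)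
    · have he : m = (m - n) + n := by omega
      have h1 : FF O D m = FF O D (m - n) + 1 := by
        have h1' := hper (m - n)
        rw [← he] at h1'
        exact h1'
      have h2 : FF O D js ≤ FF O D (m - n) :=
        hjsmin (m - n) (Finset.mem_range.mpr (by omega))
      omega
  refine ⟨⟨js, hjsn⟩, (hiff _).mpr hQjs, ?_⟩
  intro j' hj'
  have hQj' : Q j'.val := (hiff j').mp hj'
  apply Fin.ext
  show j'.val = js
  by_contra hne
  rcases Nat.lt_or_ge j'.val js with hc | hc
  · have h1 := hQj' js hc (by omega)
    have h2 := hQjs (j'.val + n) (by omega) (by omega)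
    have h3 := hper j'.val
    omega
  · have hc2 : js < j'.val := by omega
    have h1 := hQjs j'.val hc2 (by have := j'.isLt; omega)
    have h2 := hQj' (js + n) (by omega) (by omega)
    have h3 := hper js
    omega

end cycle
section count

variable [NeZero n]

lemma image_add_sub (S : Finset (Fin n)) (j : Fin n) :
    (S.image (· + j)).image (· - j) = S := by
  rw [Finset.image_image]
  have hcomp : ((fun x : Fin n => x - j) ∘ (fun x : Fin n => x + j)) = id := by
    funext x
    simp
  rw [hcomp, Finset.image_id]

lemma image_sub_add (S : Finset (Fin n)) (j : Fin n) :
    (S.image (· - j)).image (· + j) = S := by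
  rw [Finset.image_image]
  have hcomp : ((fun x : Fin n => x + j) ∘ (fun x : Fin n => x - j)) = id := by
    funext x
    simp
  rw [hcomp, Finset.image_id]

lemma rot_count (k : ℕ) (hk : 1 ≤ k) :
    n * Nat.card {p : Finset (Fin n) × Finset (Fin n) //
        Dominant p.1 p.2 ∧ p.1.card = k ∧ p.2.card = k - 1}
      = n.choose k * n.choose (k - 1) := by
  classical
  set Dom := {p : Finset (Fin n) × Finset (Fin n) //
      Dominant p.1 p.2 ∧ p.1.card = k ∧ p.2.card = k - 1} with hDom
  set All := {p : Finset (Fin n) × Finset (Fin n) // p.1.card = k ∧ p.2.card = k - 1}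
    with hAll
  have hfdef : ∀ (x : Fin n × Dom), (x.2.1.1.image (· + x.1)).card = k
      ∧ (x.2.1.2.image (· + x.1)).card = k - 1 := by
    rintro ⟨j, ⟨⟨O, D⟩, hd, hO, hD⟩⟩
    exact ⟨by rw [Finset.card_image_of_injective _ (add_left_injective j)]; exact hO,
      by rw [Finset.card_image_of_injective _ (add_left_injective j)]; exact hD⟩
  set f : Fin n × Dom → All := fun x =>
    ⟨(x.2.1.1.image (· + x.1), x.2.1.2.image (· + x.1)), hfdef x⟩ with hf
  have hbij : Function.Bijective f := by
    constructor
    · rintro ⟨j₁, ⟨⟨O₁, D₁⟩, hd₁, hO₁, hD₁⟩⟩ ⟨j₂, ⟨⟨O₂, D₂⟩, hd₂, hO₂, hD₂⟩⟩ heq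
      simp only [hf] at heq
      replace heq := congrArg Subtype.val heq
      simp only [Prod.mk.injEq] at heq
      obtain ⟨hOeq, hDeq⟩ := heq
      -- the common rotated pair
      set Qo := O₁.image (· + j₁) with hQo
      set Qd := D₁.image (· + j₁) with hQd
      have hQoc : Qo.card = k := by
        rw [hQo, Finset.card_image_of_injective _ (add_left_injective j₁)]; exact hO₁
      have hQdc : Qd.card = k - 1 := by
        rw [hQd, Finset.card_image_of_injective _ (add_left_injective j₁)]; exact hD₁
      have hb1 : O₁ = Qo.image (· - j₁) := by rw [hQo, image_add_sub]
      have hb2 : D₁ = Qd.image (· - j₁) := by rw [hQd, image_add_sub]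
      have hb3 : O₂ = Qo.image (· - j₂) := by rw [hOeq, image_add_sub]
      have hb4 : D₂ = Qd.image (· - j₂) := by rw [hDeq, image_add_sub]
      obtain ⟨ju, hju, hjuniq⟩ := exists_unique_rot (O := Qo) (D := Qd) hk hQoc hQdc
      have hj1 : Dominant (Qo.image (· - j₁)) (Qd.image (· - j₁)) := by
        rw [← hb1, ← hb2]; exact hd₁
      have hj2 : Dominant (Qo.image (· - j₂)) (Qd.image (· - j₂)) := by
        rw [← hb3, ← hb4]; exact hd₂
      have hj12 : j₁ = j₂ := (hjuniq j₁ hj1).trans (hjuniq j₂ hj2).symm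
      have hOO : O₁ = O₂ := by rw [hb1, hb3, hj12]
      have hDD : D₁ = D₂ := by rw [hb2, hb4, hj12]
      exact Prod.ext hj12 (Subtype.ext (Prod.ext hOO hDD))
    · rintro ⟨⟨Qo, Qd⟩, hQoc, hQdc⟩
      obtain ⟨j, hj, -⟩ := exists_unique_rot (O := Qo) (D := Qd) hk hQoc hQdc
      have hsubinj : Function.Injective (fun x : Fin n => x - j) := by
        intro a b hab
        have h2 := congrArg (· + j) hab
        simpa [sub_add_cancel] using h2
      refine ⟨(j, ⟨(Qo.image (· - j), Qd.image (· - j)), hj, ?_, ?_⟩), ?_⟩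
      · rw [Finset.card_image_of_injective _ hsubinj]; exact hQoc
      · rw [Finset.card_image_of_injective _ hsubinj]; exact hQdc
      · exact Subtype.ext (Prod.ext (image_sub_add Qo j) (image_sub_add Qd j))
  have hcard := Nat.card_eq_of_bijective f hbij
  rw [Nat.card_prod, Nat.card_eq_fintype_card (α := Fin n), Fintype.card_fin] at hcard
  have hAllcard : Nat.card All = n.choose k * n.choose (k - 1) := by
    have e := Nat.card_congr
      (Equiv.subtypeProdEquivProd (p := fun (O : Finset (Fin n)) => O.card = k)
        (q := fun (D : Finset (Fin n)) => D.card = k - 1))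
    rw [hAll, e, Nat.card_prod, Nat.card_eq_fintype_card, Nat.card_eq_fintype_card,
      Fintype.card_finset_len, Fintype.card_finset_len, Fintype.card_fin]
  rw [← hAllcard, ← hcard]

end count
end NCnar

/-- Noncrossing set partitions of `[n]` with exactly `k` blocks are counted by the
Narayana number `N(n,k) = (1/n) C(n,k) C(n,k-1)`. -/
theorem card_nc_partitions_eq_narayana (n k : ℕ) (hk : 1 ≤ k) (hkn : k ≤ n) :
    Nat.card {P : Finset (Finset (Fin n)) //
        IsSetPartition n P ∧ IsNoncrossing n P ∧ P.card = k} =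
      n.choose k * n.choose (k - 1) / n := by
  have hn : 0 < n := lt_of_lt_of_le hk hkn
  haveI : NeZero n := ⟨by omega⟩
  have h1 : Nat.card {P : Finset (Finset (Fin n)) //
      IsSetPartition n P ∧ IsNoncrossing n P ∧ P.card = k}
      = Nat.card {p : Finset (Fin n) × Finset (Fin n) //
        NCnar.Dominant p.1 p.2 ∧ p.1.card = k ∧ p.2.card = k - 1} :=
    Nat.card_congr ((NCnar.partPairEquiv n k).trans (NCnar.goodDomEquiv k hk))
  have h2 := NCnar.rot_count (n := n) k hk
  rw [h1, ← h2, Nat.mul_div_cancel_left _ hn]
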